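/- For integers $k \ge 3$ and $n \le k(k-1)$ with $n \ge k+1$, we have $g_k(n-1) + 1 + p(n-k, k-1) \le g_k(n)$. -/
import Mathlib


def bal (j t : ℕ) : ℕ := (t / j + 1) ^ (t % j) * (t / j) ^ (j - t % j)

def dd (k m : ℕ) : ℕ := (m / k + 1) ^ (m % k) * (m / k) ^ (k - 1 - m % k)

lemma bal_zero {j t : ℕ} (h : t < j) : bal j t = 0 := by
  unfold bal
  rw [Nat.div_eq_of_lt h, Nat.mod_eq_of_lt h]
  simp [Nat.sub_ne_zero_of_lt h]

lemma binom (x n : ℕ) : x ^ n + n * x ^ (n - 1) ≤ (x + 1) ^ n := by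
  induction n with
  | zero => simp
  | succ n ih =>
    rcases Nat.eq_zero_or_pos n with rfl | hn
    · simp
    have h1 : x ^ (n + 1) + (n + 1) * x ^ n ≤ (x ^ n + n * x ^ (n - 1)) * (x + 1) := by
      have hx : x ^ n = x ^ (n - 1) * x := by
        rw [← pow_succ]; congr 1; omega
      calc x ^ (n + 1) + (n + 1) * x ^ n
          = x ^ n * x + n * x ^ n + x ^ n := by ring
        _ ≤ x ^ n * x + n * (x ^ (n-1) * x) + (x ^ n + n * x ^ (n-1)) := by
            rw [← hx]; omega
        _ = (x ^ n + n * x ^ (n - 1)) * (x + 1) := by ring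
    calc x ^ (n + 1) + (n + 1) * x ^ n ≤ (x ^ n + n * x ^ (n - 1)) * (x + 1) := h1
      _ ≤ (x + 1) ^ n * (x + 1) := Nat.mul_le_mul_right _ ih
      _ = (x + 1) ^ (n + 1) := by rw [pow_succ]

lemma div_mod_succ {k m : ℕ} (hk : 0 < k) (h : m % k < k - 1) :
    (m + 1) / k = m / k ∧ (m + 1) % k = m % k + 1 := by
  have hdm := Nat.div_add_mod m k
  constructor
  · rw [show m + 1 = m % k + 1 + k * (m / k) by omega]
    rw [Nat.add_mul_div_left _ _ hk, Nat.div_eq_of_lt (by omega)]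
    omega
  · rw [show m + 1 = m % k + 1 + k * (m / k) by omega]
    rw [Nat.add_mul_mod_self_left, Nat.mod_eq_of_lt (by omega)]

lemma div_mod_round {k m : ℕ} (hk : 0 < k) (h : m % k = k - 1) :
    (m + 1) / k = m / k + 1 ∧ (m + 1) % k = 0 := by
  have hdm := Nat.div_add_mod m k
  have hm : m + 1 = (m / k + 1) * k := by
    rw [add_mul, one_mul, mul_comm (m / k) k]; omega
  exact ⟨by rw [hm, Nat.mul_div_cancel _ hk], by rw [hm, Nat.mul_mod_left]⟩

lemma bal_step {k : ℕ} (hk : 2 ≤ k) (m : ℕ) : bal k (m + 1) = bal k m + dd k m := by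
  have hk0 : 0 < k := by omega
  have hrk : m % k < k := Nat.mod_lt _ hk0
  by_cases h : m % k = k - 1
  · obtain ⟨h1, h2⟩ := div_mod_round hk0 h
    unfold bal dd
    rw [h1, h2, h, pow_zero, one_mul, Nat.sub_zero,
      show k - (k-1) = 1 by omega, show k - 1 - (k-1) = 0 by omega,
      pow_one, pow_zero, mul_one]
    have e : (m / k + 1) ^ k = (m / k + 1) ^ (k - 1) * (m / k + 1) := by
      rw [← pow_succ]; congr 1; omega
    rw [e]; ring
  · obtain ⟨h1, h2⟩ := div_mod_succ (m := m) hk0 (by omega)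
    unfold bal dd
    rw [h1, h2, show k - m % k = (k - 1 - m % k) + 1 by omega,
      show k - (m % k + 1) = k - 1 - m % k by omega, pow_succ, pow_succ]
    ring

lemma dd_step {k m : ℕ} (hk : 2 ≤ k) (hr : m % k ≤ k - 2) :
    dd k m + (m / k) ^ (k - 2) ≤ dd k (m + 1) := by
  have hk0 : 0 < k := by omega
  obtain ⟨h1, h2⟩ := div_mod_succ (m := m) hk0 (by omega)
  unfold dd
  rw [h1, h2, show k - 1 - (m % k + 1) = k - 2 - m % k by omega, pow_succ]
  have e1 : (m / k + 1) ^ (m % k) * (m / k + 1) * (m / k) ^ (k - 2 - m % k)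
      = (m / k + 1) ^ (m % k) * ((m / k) ^ (k - 2 - m % k) * (m / k))
        + (m / k + 1) ^ (m % k) * (m / k) ^ (k - 2 - m % k) := by
    ring
  rw [e1]
  have e2 : (m / k) ^ (k - 2 - m % k) * (m / k) = (m / k) ^ (k - 1 - m % k) := by
    rw [← pow_succ]; congr 1; omega
  have e3 : (m / k) ^ (k - 2) = (m / k) ^ (m % k) * (m / k) ^ (k - 2 - m % k) := by
    rw [← pow_add]; congr 1; omega
  rw [e2, e3]
  have : (m / k) ^ (m % k) ≤ (m / k + 1) ^ (m % k) :=
    Nat.pow_le_pow_left (by omega) _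
  exact Nat.add_le_add_left (Nat.mul_le_mul_right _ this) _

lemma dd_mono_succ {k : ℕ} (hk : 2 ≤ k) (m : ℕ) : dd k m ≤ dd k (m + 1) := by
  have hk0 : 0 < k := by omega
  have hrk : m % k < k := Nat.mod_lt _ hk0
  by_cases h : m % k = k - 1
  · obtain ⟨h1, h2⟩ := div_mod_round hk0 h
    unfold dd
    rw [h1, h2, h, pow_zero, one_mul, show k - 1 - (k-1) = 0 by omega, pow_zero, mul_one,
      show k - 1 - 0 = k - 1 by omega]
  · calc dd k m ≤ dd k m + (m / k) ^ (k - 2) := Nat.le_add_right _ _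
      _ ≤ dd k (m + 1) := dd_step hk (by omega)

lemma dd_mono {k : ℕ} (hk : 2 ≤ k) {m m' : ℕ} (h : m ≤ m') : dd k m ≤ dd k m' := by
  induction m', h using Nat.le_induction with
  | base => exact le_rfl
  | succ n hn ih => exact le_trans ih (dd_mono_succ hk n)

lemma two_mul_pow_le {a r e : ℕ} (h : a + 2 ≤ r + e) :
    2 * ((a + 1) ^ r * a ^ e) ≤ (a + 2) ^ r * (a + 1) ^ e := by
  have binom : ∀ x n : ℕ, x ^ n + n * x ^ (n - 1) ≤ (x + 1) ^ n := by
    intro x n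
    induction n with
    | zero => simp
    | succ n ih =>
      rcases Nat.eq_zero_or_pos n with rfl | hn
      · simp
      have hx : x ^ n = x ^ (n - 1) * x := by rw [← pow_succ]; congr 1; omega
      calc x ^ (n + 1) + (n + 1) * x ^ n
          = x ^ n * x + n * x ^ n + x ^ n := by ring
        _ ≤ x ^ n * x + n * (x ^ (n-1) * x) + (x ^ n + n * x ^ (n-1)) := by rw [← hx]; omega
        _ = (x ^ n + n * x ^ (n - 1)) * (x + 1) := by ring
        _ ≤ (x + 1) ^ n * (x + 1) := Nat.mul_le_mul_right _ ih
        _ = (x + 1) ^ (n + 1) := by rw [pow_succ]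
  rcases Nat.eq_zero_or_pos e with rfl | he
  · -- r ≥ a + 2 : 2*(a+1)^r ≤ (a+2)^r
    simp only [pow_zero, mul_one]
    have hr1 : 1 ≤ r := by omega
    have hb := binom (a + 1) r
    have hx : (a + 1) ^ r = (a + 1) ^ (r - 1) * (a + 1) := by
      rw [← pow_succ]; congr 1; omega
    have h2 : (a + 1) ^ r ≤ r * (a + 1) ^ (r - 1) := by
      calc (a + 1) ^ r = (a + 1) * (a + 1) ^ (r - 1) := by rw [hx]; ring
        _ ≤ r * (a + 1) ^ (r - 1) := Nat.mul_le_mul_right _ (by omega)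
    rw [show a + 1 + 1 = a + 2 by omega] at hb
    omega
  rcases Nat.eq_zero_or_pos a with rfl | ha
  · have : (0 : ℕ) ^ e = 0 := zero_pow (by omega)
    simp [this]
  rcases Nat.eq_zero_or_pos r with rfl | hr
  · -- e ≥ a + 2 : 2*a^e ≤ (a+1)^e
    simp only [pow_zero, one_mul]
    have hb := binom a e
    have hx : a ^ e = a ^ (e - 1) * a := by rw [← pow_succ]; congr 1; omega
    have h2 : a ^ e ≤ e * a ^ (e - 1) := by
      calc a ^ e = a * a ^ (e - 1) := by rw [hx]; ring
        _ ≤ e * a ^ (e - 1) := Nat.mul_le_mul_right _ (by omega)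
    omega
  -- main case
  have b1 := binom (a + 1) r
  have b2 := binom a e
  have hxr : (a + 1) ^ r = (a + 1) ^ (r - 1) * (a + 1) := by rw [← pow_succ]; congr 1; omega
  have hxe : a ^ e = a ^ (e - 1) * a := by rw [← pow_succ]; congr 1; omega
  have scalar : a * (a + 1) ≤ r * a + e * (a + 1) := by nlinarith
  have key : (a + 1) ^ r * a ^ e ≤ r * (a + 1) ^ (r - 1) * a ^ e + (a + 1) ^ r * (e * a ^ (e - 1)) := by
    calc (a + 1) ^ r * a ^ e = (a + 1) ^ (r - 1) * a ^ (e - 1) * (a * (a + 1)) := by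
          rw [hxr, hxe]; ring
      _ ≤ (a + 1) ^ (r - 1) * a ^ (e - 1) * (r * a + e * (a + 1)) :=
          Nat.mul_le_mul_left _ scalar
      _ = r * (a + 1) ^ (r - 1) * (a ^ (e - 1) * a) + (a + 1) ^ (r - 1) * (a + 1) * (e * a ^ (e - 1)) := by
          ring
      _ = r * (a + 1) ^ (r - 1) * a ^ e + (a + 1) ^ r * (e * a ^ (e - 1)) := by rw [← hxr, ← hxe]
  calc 2 * ((a + 1) ^ r * a ^ e)
      = (a + 1) ^ r * a ^ e + (a + 1) ^ r * a ^ e := by ring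
    _ ≤ (a + 1) ^ r * a ^ e + (r * (a + 1) ^ (r - 1) * a ^ e + (a + 1) ^ r * (e * a ^ (e - 1))) :=
        Nat.add_le_add_left key _
    _ ≤ ((a + 1) ^ r + r * (a + 1) ^ (r - 1)) * (a ^ e + e * a ^ (e - 1)) := by
        have expand : ((a + 1) ^ r + r * (a + 1) ^ (r - 1)) * (a ^ e + e * a ^ (e - 1))
            = (a + 1) ^ r * a ^ e + (r * (a + 1) ^ (r - 1) * a ^ e + (a + 1) ^ r * (e * a ^ (e - 1)))
              + r * (a + 1) ^ (r - 1) * (e * a ^ (e - 1)) := by ring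
        rw [expand]; exact Nat.le_add_right _ _
    _ ≤ (a + 1 + 1) ^ r * (a + 1) ^ e := Nat.mul_le_mul b1 b2
    _ = (a + 2) ^ r * (a + 1) ^ e := by norm_num

lemma dd_double {k m : ℕ} (hk : 3 ≤ k) (ha : m / k ≤ k - 3) :
    2 * dd k m ≤ dd k (m + k) := by
  have hk0 : 0 < k := by omega
  have h1 : (m + k) / k = m / k + 1 := by rw [Nat.add_div_right _ hk0]
  have h2 : (m + k) % k = m % k := by rw [Nat.add_mod_right]
  unfold dd
  rw [h1, h2, show m / k + 1 + 1 = m / k + 2 by omega]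
  exact two_mul_pow_le (by have : m % k < k := Nat.mod_lt _ hk0; omega)

lemma dd_strict {k x : ℕ} (hk : 3 ≤ k) (hx : k - 1 ≤ x) :
    dd k x + 1 ≤ dd k (x + (k - 1)) := by
  have hk0 : 0 < k := by omega
  -- find suitable m
  obtain ⟨m, hm1, hm2, hm3, hm4⟩ :
      ∃ m, x ≤ m ∧ m % k ≤ k - 2 ∧ 1 ≤ m / k ∧ m + 1 ≤ x + (k - 1) := by
    by_cases hxk : x < k
    · refine ⟨k, by omega, by rw [Nat.mod_self]; omega, by rw [Nat.div_self hk0], by omega⟩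
    · by_cases hr : x % k ≤ k - 2
      · refine ⟨x, le_rfl, hr, ?_, by omega⟩
        rw [Nat.le_div_iff_mul_le hk0, one_mul]; omega
      · have hrr : x % k = k - 1 := by have : x % k < k := Nat.mod_lt _ hk0; omega
        have hdm := Nat.div_add_mod x k
        have hm : x + 1 = (x / k + 1) * k := by
          rw [add_mul, one_mul, mul_comm (x / k) k]; omega
        refine ⟨x + 1, by omega, ?_, ?_, by omega⟩
        · rw [hm, Nat.mul_mod_left]; omega
        · rw [hm, Nat.mul_div_cancel _ hk0]; exact Nat.le_add_left _ _
  have s1 : dd k x ≤ dd k m := dd_mono (by omega) hm1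
  have s2 : dd k m + 1 ≤ dd k (m + 1) := by
    have := dd_step (m := m) (by omega) hm2
    have hp : 1 ≤ (m / k) ^ (k - 2) := Nat.one_le_pow _ _ (by omega)
    omega
  have s3 : dd k (m + 1) ≤ dd k (x + (k - 1)) := dd_mono (by omega) hm4
  omega

lemma bal_eq_dd {k : ℕ} (hk : 3 ≤ k) (v : ℕ) :
    bal (k - 1) v = dd k (k * (v / (k - 1)) + v % (k - 1)) := by
  have hk0 : 0 < k := by omega
  have hd1 : v % (k - 1) < k - 1 := Nat.mod_lt _ (by omega)
  have h1 : (k * (v / (k - 1)) + v % (k - 1)) / k = v / (k - 1) := by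
    rw [Nat.mul_add_div hk0, show v % (k - 1) / k = 0 from Nat.div_eq_of_lt (by omega),
      Nat.add_zero]
  have h2 : (k * (v / (k - 1)) + v % (k - 1)) % k = v % (k - 1) := by
    rw [Nat.mul_add_mod, Nat.mod_eq_of_lt (by omega)]
  unfold bal dd
  rw [h1, h2]

lemma K5 {k b s : ℕ} (hk : 3 ≤ k) (hb : k ≤ b) (hbs : b + (k - 1) ≤ s) (hs : s ≤ k * (k - 1)) :
    dd k (b - 1) + bal (k - 1) (s - b) ≤ dd k (s - 1) := by
  have hk0 : 0 < k := by omega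
  set v := s - b with hv
  set c := v / (k - 1) with hc
  set d := v % (k - 1) with hd
  have hd1 : d < k - 1 := Nat.mod_lt _ (by omega)
  have hvc : (k - 1) * c + d = v := Nat.div_add_mod v (k - 1)
  have hv1 : k - 1 ≤ v := by omega
  have hc1 : 1 ≤ c := (Nat.one_le_div_iff (by omega)).mpr hv1
  have hkk : k * (k - 1) = k * (k - 2) + k := by
    rw [show k - 1 = (k - 2) + 1 by omega, Nat.mul_add, Nat.mul_one]
  have hvk2 : v ≤ k * (k - 2) := by omega
  have hck2 : c ≤ k - 2 := by
    have hsq : k * (k - 2) < (k - 1) * (k - 1) := by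
      obtain ⟨k2, rfl⟩ : ∃ k2, k = k2 + 3 := ⟨k - 3, by omega⟩
      simp only [Nat.add_sub_cancel, show k2 + 3 - 2 = k2 + 1 by omega,
        show k2 + 3 - 1 = k2 + 2 by omega]
      nlinarith
    have := (Nat.div_lt_iff_lt_mul (show 0 < k - 1 by omega)).mpr
      (show v < (k - 1) * (k - 1) by omega)
    omega
  have hbal : bal (k - 1) v = dd k (k * c + d) := bal_eq_dd hk v
  set y := k * c + d with hy
  have hyv : y = v + c := by
    have h1 : (k - 1) * c = k * c - c := Nat.sub_one_mul k c
    have h2 : c ≤ k * c := Nat.le_mul_of_pos_left c hk0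
    omega
  by_cases hv2 : v = k - 1
  · have hc2 : c = 1 := by rw [hc, hv2, Nat.div_self (by omega)]
    have hd2 : d = 0 := by rw [hd, hv2, Nat.mod_self]
    have hddk : dd k k = 1 := by
      unfold dd
      rw [Nat.div_self hk0, Nat.mod_self, pow_zero, one_pow, Nat.one_mul]
    have hyk : y = k := by rw [hy, hc2, hd2, Nat.mul_one, Nat.add_zero]
    rw [hbal, hyk, hddk]
    have hst := dd_strict hk (show k - 1 ≤ b - 1 by omega)
    rw [show b - 1 + (k - 1) = s - 1 by omega] at hst
    exact hst
  · have hv3 : k ≤ v := by omega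
    by_cases hx2 : c + k ≤ b - 1
    · have hyz : y + k ≤ s - 1 := by omega
      have hxz : b - 1 + k ≤ s - 1 := by omega
      set w := max (b - 1) y with hw
      have hwk : w + k ≤ s - 1 := by
        rcases max_choice (b - 1) y with h | h <;> omega
      have hwdiv : w / k ≤ k - 3 := by
        have hcm : (k - 2) * k = k * (k - 2) := Nat.mul_comm _ _
        have h1 : w < (k - 2) * k := by omega
        have := (Nat.div_lt_iff_lt_mul hk0).mpr h1
        omega
      calc dd k (b - 1) + bal (k - 1) v = dd k (b - 1) + dd k y := by rw [hbal]
        _ ≤ 2 * dd k w := by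
            have h1 : dd k (b - 1) ≤ dd k w := dd_mono (by omega) (le_max_left _ _)
            have h2 : dd k y ≤ dd k w := dd_mono (by omega) (le_max_right _ _)
            omega
        _ ≤ dd k (w + k) := dd_double hk hwdiv
        _ ≤ dd k (s - 1) := dd_mono (by omega) (by omega)
    · have hd2 : d ≤ k - 2 := by omega
      have hym : y % k = d := by
        rw [hy, Nat.mul_add_mod, Nat.mod_eq_of_lt (by omega)]
      have hyd : y / k = c := by
        rw [hy, Nat.mul_add_div hk0, show d / k = 0 from Nat.div_eq_of_lt (by omega),
          Nat.add_zero]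
      have hstep1 : dd k (b - 1) ≤ dd k (k + (c - 1)) := dd_mono (by omega) (by omega)
      have hval : dd k (k + (c - 1)) = 2 ^ (c - 1) := by
        have h1 : (k + (c - 1)) / k = 1 := by
          rw [Nat.add_comm, Nat.add_div_right _ hk0,
            show (c - 1) / k = 0 from Nat.div_eq_of_lt (by omega)]
        have h2 : (k + (c - 1)) % k = c - 1 := by
          rw [Nat.add_comm, Nat.add_mod_right, Nat.mod_eq_of_lt (by omega)]
        unfold dd
        rw [h1, h2, one_pow, mul_one]
      have hpow : 2 ^ (c - 1) ≤ c ^ (k - 2) := by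
        rcases eq_or_lt_of_le hc1 with h1 | h2
        · rw [← h1]; simp
        · calc 2 ^ (c - 1) ≤ 2 ^ (k - 2) := Nat.pow_le_pow_right (by omega) (by omega)
            _ ≤ c ^ (k - 2) := Nat.pow_le_pow_left (by omega) _
      have hstep2 : dd k y + c ^ (k - 2) ≤ dd k (y + 1) := by
        have := dd_step (m := y) (show 2 ≤ k by omega) (by omega)
        rw [hyd] at this
        exact this
      have hy1 : y + 1 ≤ s - 1 := by omega
      calc dd k (b - 1) + bal (k - 1) v = dd k (b - 1) + dd k y := by rw [hbal]
        _ ≤ 2 ^ (c - 1) + dd k y := by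
            have := hstep1.trans_eq hval; omega
        _ ≤ c ^ (k - 2) + dd k y := by omega
        _ ≤ dd k (y + 1) := by omega
        _ ≤ dd k (s - 1) := dd_mono (by omega) hy1

theorem prod_le_bal_aux {ι : Type*} [DecidableEq ι] (N : ℕ) :
    ∀ (t : Finset ι) (f : ι → ℕ), (∑ i ∈ t, f i * f i) ≤ N →
      ∏ i ∈ t, f i ≤ bal t.card (∑ i ∈ t, f i) := by
  induction N using Nat.strong_induction_on with
  | _ N ih =>
    intro t f hN
    by_cases hunb : ∃ i ∈ t, ∃ j ∈ t, f j + 2 ≤ f i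
    · obtain ⟨i, hi, j, hj, hij⟩ := hunb
      have hne : j ≠ i := by intro h; subst h; omega
      obtain ⟨e, he⟩ : ∃ e, f i = f j + 2 + e := ⟨f i - (f j + 2), by omega⟩
      set f' := Function.update (Function.update f i (f i - 1)) j (f j + 1) with hf'
      have hji : j ∈ t.erase i := Finset.mem_erase.mpr ⟨hne, hj⟩
      set t2 := (t.erase i).erase j with ht2
      have hfi : f' i = f i - 1 := by
        rw [hf', Function.update_of_ne (Ne.symm hne), Function.update_self]
      have hfj : f' j = f j + 1 := by rw [hf', Function.update_self]
      have hoff : ∀ x ∈ t2, f' x = f x := by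
        intro x hx
        rw [ht2, Finset.mem_erase, Finset.mem_erase] at hx
        rw [hf', Function.update_of_ne hx.1, Function.update_of_ne hx.2.1]
      have dsum : ∀ h : ι → ℕ, ∑ x ∈ t, h x = h i + (h j + ∑ x ∈ t2, h x) := by
        intro h
        rw [← Finset.add_sum_erase _ h hi, ← Finset.add_sum_erase _ h hji]
      have dprod : ∀ h : ι → ℕ, ∏ x ∈ t, h x = h i * (h j * ∏ x ∈ t2, h x) := by
        intro h
        rw [← Finset.mul_prod_erase _ h hi, ← Finset.mul_prod_erase _ h hji]
      have hsum2 : ∑ x ∈ t2, f' x = ∑ x ∈ t2, f x := Finset.sum_congr rfl hoff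
      have hprod2 : ∏ x ∈ t2, f' x = ∏ x ∈ t2, f x := Finset.prod_congr rfl hoff
      have hsumsq2 : ∑ x ∈ t2, f' x * f' x = ∑ x ∈ t2, f x * f x :=
        Finset.sum_congr rfl (fun x hx => by rw [hoff x hx])
      have hsum : ∑ x ∈ t, f' x = ∑ x ∈ t, f x := by
        rw [dsum f', dsum f, hsum2, hfi, hfj]; omega
      have hmeas : ∑ x ∈ t, f' x * f' x < ∑ x ∈ t, f x * f x := by
        rw [dsum (fun x => f' x * f' x), dsum (fun x => f x * f x)]
        simp only [hsumsq2, hfi, hfj, he, show f j + 2 + e - 1 = f j + 1 + e by omega]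
        have : (f j + 1 + e) * (f j + 1 + e) + (f j + 1) * (f j + 1)
            < (f j + 2 + e) * (f j + 2 + e) + f j * f j := by nlinarith
        omega
      have hprod : ∏ x ∈ t, f x ≤ ∏ x ∈ t, f' x := by
        rw [dprod f', dprod f, hprod2, hfi, hfj, he,
          show f j + 2 + e - 1 = f j + 1 + e by omega,
          ← Nat.mul_assoc, ← Nat.mul_assoc]
        have : (f j + 2 + e) * f j ≤ (f j + 1 + e) * (f j + 1) := by nlinarith
        exact Nat.mul_le_mul_right _ this
      calc ∏ x ∈ t, f x ≤ ∏ x ∈ t, f' x := hprod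
        _ ≤ bal t.card (∑ x ∈ t, f' x) :=
            ih (∑ x ∈ t, f' x * f' x) (by omega) t f' le_rfl
        _ = bal t.card (∑ x ∈ t, f x) := by rw [hsum]
    · push_neg at hunb
      rcases t.eq_empty_or_nonempty with rfl | hne
      · simp [bal]
      · obtain ⟨i0, hi0, hmin⟩ := t.exists_min_image f hne
        have hval : ∀ i ∈ t, f i = f i0 ∨ f i = f i0 + 1 := by
          intro i hi
          have h1 := hmin i hi
          have h2 := hunb i hi i0 hi0
          omega
        set a := f i0 with ha
        have hcards : (t.filter (fun i => f i = a + 1)).card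
            + (t.filter (fun i => ¬ f i = a + 1)).card = t.card :=
          Finset.card_filter_add_card_filter_not (p := fun i => f i = a + 1)
        have hcu : (t.filter (fun i => f i = a + 1)).card < t.card := by
          apply Finset.card_lt_card
          rw [Finset.ssubset_iff_of_subset (Finset.filter_subset _ _)]
          refine ⟨i0, hi0, ?_⟩
          simp only [Finset.mem_filter]
          omega
        have hvalnot : ∀ x ∈ t.filter (fun i => ¬ f i = a + 1), f x = a := by
          intro x hx
          obtain ⟨hxt, hxne⟩ := Finset.mem_filter.mp hx
          rcases hval x hxt with h | h
          · exact h
          · exact absurd h hxne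
        have hsumu : ∑ x ∈ t.filter (fun i => f i = a + 1), f x
            = (t.filter (fun i => f i = a + 1)).card * (a + 1) := by
          rw [Finset.sum_congr rfl (fun x hx => (Finset.mem_filter.mp hx).2),
            Finset.sum_const, smul_eq_mul]
        have hsumnu : ∑ x ∈ t.filter (fun i => ¬ f i = a + 1), f x
            = (t.card - (t.filter (fun i => f i = a + 1)).card) * a := by
          rw [Finset.sum_congr rfl hvalnot, Finset.sum_const, smul_eq_mul]
          congr 1
          omega
        have hS : ∑ x ∈ t, f x = t.card * a + (t.filter (fun i => f i = a + 1)).card := by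
          rw [← Finset.sum_filter_add_sum_filter_not t (fun i => f i = a + 1) f,
            hsumu, hsumnu]
          obtain ⟨w, hw⟩ : ∃ w, t.card = (t.filter (fun i => f i = a + 1)).card + w :=
            ⟨t.card - (t.filter (fun i => f i = a + 1)).card, by omega⟩
          rw [hw, show (t.filter (fun i => f i = a + 1)).card + w
            - (t.filter (fun i => f i = a + 1)).card = w by omega]
          ring
        have hprodu : ∏ x ∈ t.filter (fun i => f i = a + 1), f x
            = (a + 1) ^ (t.filter (fun i => f i = a + 1)).card := by
          rw [Finset.prod_congr rfl (fun x hx => (Finset.mem_filter.mp hx).2),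
            Finset.prod_const]
        have hprodnu : ∏ x ∈ t.filter (fun i => ¬ f i = a + 1), f x
            = a ^ (t.card - (t.filter (fun i => f i = a + 1)).card) := by
          rw [Finset.prod_congr rfl hvalnot, Finset.prod_const]
          congr 1
          omega
        have hP : ∏ x ∈ t, f x = (a + 1) ^ (t.filter (fun i => f i = a + 1)).card
            * a ^ (t.card - (t.filter (fun i => f i = a + 1)).card) := by
          rw [← Finset.prod_filter_mul_prod_filter_not t (fun i => f i = a + 1) f,
            hprodu, hprodnu]
        have hc0 : 0 < t.card := Finset.card_pos.mpr hne
        have hdiv : (t.card * a + (t.filter (fun i => f i = a + 1)).card) / t.card = a := by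
          rw [Nat.mul_add_div hc0, Nat.div_eq_of_lt hcu, Nat.add_zero]
        have hmod : (t.card * a + (t.filter (fun i => f i = a + 1)).card) % t.card
            = (t.filter (fun i => f i = a + 1)).card := by
          rw [Nat.mul_add_mod, Nat.mod_eq_of_lt hcu]
        rw [hP, hS]
        unfold bal
        rw [hdiv, hmod]

theorem prod_le_bal {ι : Type*} [DecidableEq ι] (t : Finset ι) (f : ι → ℕ) :
    ∏ i ∈ t, f i ≤ bal t.card (∑ i ∈ t, f i) :=
  prod_le_bal_aux (∑ i ∈ t, f i * f i) t f le_rfl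


theorem Lstar {k : ℕ} (hk : 3 ≤ k) :
    ∀ s, s ≤ k * (k - 1) → ∀ x : Fin k → ℕ, (∑ i, x i) = s →
      (∑ i, bal k (x i)) + ∏ i, x i ≤ bal k s := by
  intro s
  induction s using Nat.strong_induction_on with
  | _ s ih =>
    intro hs x hx
    by_cases hsmall : ∀ i, x i ≤ k - 1
    · have h1 : ∀ i, bal k (x i) = 0 := fun i => bal_zero (by have := hsmall i; omega)
      rw [Finset.sum_congr rfl (fun i _ => h1 i), Finset.sum_const, smul_eq_mul,
        Nat.mul_zero, Nat.zero_add]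
      have := prod_le_bal Finset.univ x
      rwa [Finset.card_univ, Fintype.card_fin, hx] at this
    · push_neg at hsmall
      obtain ⟨j, hj⟩ := hsmall
      have hxj : k ≤ x j := by omega
      have hjs : x j ≤ s := by
        rw [← hx]
        exact Finset.single_le_sum (fun i _ => Nat.zero_le _) (Finset.mem_univ j)
      set x' := Function.update x j (x j - 1) with hx'
      have hx'j : x' j = x j - 1 := Function.update_self _ _ _
      have hoff : ∀ i, i ≠ j → x' i = x i := fun i hij => Function.update_of_ne hij _ _
      have e1 : x j + ∑ i ∈ Finset.univ.erase j, x i = s := by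
        rw [Finset.add_sum_erase _ x (Finset.mem_univ j)]; exact hx
      have ee : (Finset.univ.erase j).sum x = ∑ i ∈ Finset.univ.erase j, x i := rfl
      have hsum' : (∑ i, x' i) = s - 1 := by
        rw [← Finset.add_sum_erase _ x' (Finset.mem_univ j), hx'j,
          Finset.sum_congr rfl (fun i hi => hoff i (Finset.mem_erase.mp hi).1)]
        omega
      set R := ∏ i ∈ Finset.univ.erase j, x i with hR
      have hprod : ∏ i, x i = x j * R :=
        (Finset.mul_prod_erase _ x (Finset.mem_univ j)).symm
      have hprod' : ∏ i, x' i = (x j - 1) * R := by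
        rw [← Finset.mul_prod_erase _ x' (Finset.mem_univ j), hx'j,
          Finset.prod_congr rfl (fun i hi => hoff i (Finset.mem_erase.mp hi).1)]
      have hbs : (∑ i, bal k (x i))
          = bal k (x j) + ∑ i ∈ Finset.univ.erase j, bal k (x i) :=
        (Finset.add_sum_erase _ (fun i => bal k (x i)) (Finset.mem_univ j)).symm
      have hbs' : (∑ i, bal k (x' i))
          = bal k (x j - 1) + ∑ i ∈ Finset.univ.erase j, bal k (x i) := by
        rw [← Finset.add_sum_erase _ (fun i => bal k (x' i)) (Finset.mem_univ j), hx'j,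
          Finset.sum_congr rfl (fun i hi => by rw [hoff i (Finset.mem_erase.mp hi).1])]
      have hih := ih (s - 1) (by omega) (by omega) x' hsum'
      have hbalstep : bal k (x j) = bal k (x j - 1) + dd k (x j - 1) := by
        have := bal_step (show 2 ≤ k by omega) (x j - 1)
        rwa [show x j - 1 + 1 = x j by omega] at this
      have hRbound : R ≤ bal (k - 1) (s - x j) := by
        have hcard : (Finset.univ.erase j).card = k - 1 := by
          rw [Finset.card_erase_of_mem (Finset.mem_univ j), Finset.card_univ,
            Fintype.card_fin]
        have hsums : (∑ i ∈ Finset.univ.erase j, x i) = s - x j := by omega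
        have := prod_le_bal (Finset.univ.erase j) x
        rwa [hcard, hsums] at this
      have hkey : dd k (x j - 1) + R ≤ dd k (s - 1) := by
        by_cases hcase : x j + (k - 1) ≤ s
        · have := K5 hk hxj hcase hs
          omega
        · have hz : bal (k - 1) (s - x j) = 0 := bal_zero (by omega)
          have hR0 : R = 0 := by omega
          rw [hR0, Nat.add_zero]
          exact dd_mono (by omega) (by omega)
      have hsplit : bal k (s - 1) + dd k (s - 1) = bal k s := by
        have hh := bal_step (show 2 ≤ k by omega) (s - 1)
        rw [show s - 1 + 1 = s by omega] at hh
        exact hh.symm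
      have hmul : (x j - 1) * R + R = x j * R := by
        have h1 : (x j - 1) * R = x j * R - R := Nat.sub_one_mul _ _
        have h2 : R ≤ x j * R := Nat.le_mul_of_pos_left R (by omega)
        omega
      omega

/-- `p n k` : maximum of `∏ q i` over partitions of `n` into `k` nonnegative
parts each strictly less than `n` (so `p 0 0 = 1`). -/
noncomputable def p (n k : ℕ) : ℕ :=
  sSup {m | ∃ q : Fin k → ℕ, (∑ i, q i) = n ∧ (∀ i, q i < n) ∧ m = ∏ i, q i}

/-- The Erdős–Hajnal function `g k s`: `g k s = 0` for `s < k` and otherwise the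
maximum of `∑ i, g k (s i) + ∏ i, s i` over nontrivial partitions of `s` into `k` parts. -/
noncomputable def g (k : ℕ) (s : ℕ) : ℕ :=
  Nat.strongRecOn s fun s ih =>
    if s < k then 0
    else sSup {m | ∃ q : Fin k → ℕ, ∃ h : ∀ i, q i < s,
      (∑ i, q i) = s ∧ m = (∑ i, ih (q i) (h i)) + ∏ i, q i}

theorem g_eq (k s : ℕ) : g k s = if s < k then 0
    else sSup {m | ∃ q : Fin k → ℕ, ∃ h : ∀ i, q i < s,
      (∑ i, q i) = s ∧ m = (∑ i, g k (q i)) + ∏ i, q i} := by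
  unfold g Nat.strongRecOn
  rw [WellFounded.fix_eq]

theorem g_le {k : ℕ} (hk : 3 ≤ k) : ∀ s, s ≤ k * (k - 1) → g k s ≤ bal k s := by
  intro s
  induction s using Nat.strong_induction_on with
  | _ s ih =>
    intro hs
    rw [g_eq]
    split_ifs with h
    · exact Nat.zero_le _
    · rcases Set.eq_empty_or_nonempty
        {m | ∃ q : Fin k → ℕ, ∃ h : ∀ i, q i < s,
          (∑ i, q i) = s ∧ m = (∑ i, g k (q i)) + ∏ i, q i} with he | hne
      · rw [he, csSup_empty]
        exact bot_le
      · apply csSup_le hne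
        rintro m ⟨q, hq, hsq, rfl⟩
        have hstep : (∑ i, g k (q i)) ≤ ∑ i, bal k (q i) :=
          Finset.sum_le_sum (fun i _ => ih (q i) (hq i) (by have := hq i; omega))
        have := Lstar hk s hs q hsq
        omega

theorem g_ge {k n : ℕ} (hk : 3 ≤ k) (hn : k ≤ n) (hn' : n ≤ k * (k - 1)) :
    bal k n ≤ g k n := by
  have hk0 : 0 < k := by omega
  rw [g_eq, if_neg (by omega)]
  set a := n / k with hadef
  set r := n % k with hrdef
  have hr : r < k := Nat.mod_lt _ hk0
  have hdm : k * a + r = n := Nat.div_add_mod n k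
  have hak : a + 1 < n := by
    have h3 : n / k ≤ n / 3 := Nat.div_le_div_left (by omega) (by omega)
    omega
  set q : Fin k → ℕ := fun i => if i.val < r then a + 1 else a with hqdef
  have hqle : ∀ i, q i ≤ a + 1 := by
    intro i
    rw [hqdef]
    dsimp only
    split <;> omega
  have hqlt : ∀ i, q i < n := fun i => lt_of_le_of_lt (hqle i) hak
  have hfilter : (Finset.range k).filter (fun i => i < r) = Finset.range r := by
    ext m
    simp only [Finset.mem_filter, Finset.mem_range]
    omega
  have hcount : (∑ i : Fin k, if i.val < r then (1 : ℕ) else 0) = r := by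
    rw [Fin.sum_univ_eq_sum_range (fun i => if i < r then (1 : ℕ) else 0)]
    rw [← Finset.sum_filter, hfilter, Finset.sum_const, smul_eq_mul, Nat.mul_one,
      Finset.card_range]
  have hsum : (∑ i, q i) = n := by
    have : (∑ i, q i) = ∑ i : Fin k, (a + if i.val < r then 1 else 0) := by
      apply Finset.sum_congr rfl
      intro i _
      rw [hqdef]
      dsimp only
      split <;> omega
    rw [this, Finset.sum_add_distrib, Finset.sum_const, Finset.card_univ,
      Fintype.card_fin, smul_eq_mul, hcount]
    omega
  have hcardf : (Finset.univ.filter (fun i : Fin k => i.val < r)).card = r := by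
    rw [Finset.card_filter]
    exact hcount
  have hcardnf : (Finset.univ.filter (fun i : Fin k => ¬ i.val < r)).card = k - r := by
    have := Finset.card_filter_add_card_filter_not
      (s := (Finset.univ : Finset (Fin k))) (p := fun i => i.val < r)
    rw [Finset.card_univ, Fintype.card_fin] at this
    omega
  have hprodq : (∏ i, q i) = bal k n := by
    have he : (∏ i, q i) = ∏ i : Fin k, (if i.val < r then a + 1 else a) := rfl
    rw [he, Finset.prod_ite, Finset.prod_const, Finset.prod_const, hcardf, hcardnf]
    unfold bal
    rw [← hadef, ← hrdef]
  have hub : ∀ m ∈ {m | ∃ q : Fin k → ℕ, ∃ h : ∀ i, q i < n,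
      (∑ i, q i) = n ∧ m = (∑ i, g k (q i)) + ∏ i, q i}, m ≤ bal k n := by
    rintro m ⟨q', hq', hsq', rfl⟩
    have hstep : (∑ i, g k (q' i)) ≤ ∑ i, bal k (q' i) :=
      Finset.sum_le_sum (fun i _ => g_le hk (q' i) (by have := hq' i; omega))
    have := Lstar hk n hn' q' hsq'
    omega
  have hmem : ((∑ i, g k (q i)) + ∏ i, q i) ∈ {m | ∃ q : Fin k → ℕ, ∃ h : ∀ i, q i < n,
      (∑ i, q i) = n ∧ m = (∑ i, g k (q i)) + ∏ i, q i} := ⟨q, hqlt, hsum, rfl⟩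
  calc bal k n = ∏ i, q i := hprodq.symm
    _ ≤ (∑ i, g k (q i)) + ∏ i, q i := Nat.le_add_left _ _
    _ ≤ sSup {m | ∃ q : Fin k → ℕ, ∃ h : ∀ i, q i < n,
        (∑ i, q i) = n ∧ m = (∑ i, g k (q i)) + ∏ i, q i} :=
      le_csSup ⟨bal k n, hub⟩ hmem

theorem p_le_bal {k m : ℕ} (hk : 3 ≤ k) (m' : ℕ) : p m (k - 1) ≤ bal (k - 1) m := by
  unfold p
  rcases Set.eq_empty_or_nonempty
      {mm | ∃ q : Fin (k - 1) → ℕ, (∑ i, q i) = m ∧ (∀ i, q i < m) ∧ mm = ∏ i, q i}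
    with he | hne
  · rw [he, csSup_empty]
    exact bot_le
  · apply csSup_le hne
    rintro mm ⟨q, hsq, hlt, rfl⟩
    have := prod_le_bal Finset.univ q
    rwa [Finset.card_univ, Fintype.card_fin, hsq] at this

lemma dd_km1 {k : ℕ} (hk : 3 ≤ k) : dd k (k - 1) = 1 := by
  unfold dd
  rw [Nat.div_eq_of_lt (by omega), Nat.mod_eq_of_lt (by omega)]
  simp

theorem g_induction_step (k n : ℕ) (hk : 3 ≤ k) (hn : k + 1 ≤ n) (hn' : n ≤ k * (k - 1)) :
    g k (n - 1) + 1 + p (n - k) (k - 1) ≤ g k n := by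
  have h1 : g k (n - 1) ≤ bal k (n - 1) := g_le hk (n - 1) (by omega)
  have h2 : p (n - k) (k - 1) ≤ bal (k - 1) (n - k) := p_le_bal hk 0
  have h3 : 1 + bal (k - 1) (n - k) ≤ dd k (n - 1) := by
    have hdd1 : dd k (k - 1) = 1 := dd_km1 hk
    by_cases hc : k + (k - 1) ≤ n
    · have hK := K5 (b := k) (s := n) hk le_rfl hc hn'
      rw [hdd1] at hK
      omega
    · have hz : bal (k - 1) (n - k) = 0 := bal_zero (by omega)
      have hm := dd_mono (show 2 ≤ k by omega) (show k - 1 ≤ n - 1 by omega)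
      omega
  have h4 : bal k (n - 1) + dd k (n - 1) = bal k n := by
    have hh := bal_step (show 2 ≤ k by omega) (n - 1)
    rw [show n - 1 + 1 = n by omega] at hh
    exact hh.symm
  have h5 : bal k n ≤ g k n := g_ge hk (by omega) hn'
  omega
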